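/- Assume the straight-shape Carter–Payne setup: λ and μ are ℓ-multipartitions of n with μ strictly dominating λ in the dominance order, ν = λ ∪ μ is an ℓ-multipartition of n+γ, and [μ*] := [ν]∖[λ] and [λ*] := [ν]∖[μ] are congruent removable e-small straight shapes with every node of [μ*] preceding every node of [λ*]. Write [μ*]=[ξ⁰] ≺ [ξ¹] ≺ ⋯ ≺ [ξ^{c−1}] ≺ [ξ^c]=[λ*], where [ξ¹],…,[ξ^{c−1}] are the maximal (under inclusion) removable e-small straight shapes of [ν] that are subshapes of [μ*] and lie strictly between [μ*] and [λ*] in the node order. Then the tableau 𝔱*_μ := (𝔱_λ^ν σ_{μ*,ξ¹} ⋯ σ_{μ*,ξ^{c−1}} σ_{μ*,ξ^c})↓n is a standard μ-tableau, and moreover for every k ∈ {1,…,n} the residue of (𝔱*_μ)^{−1}(k) equals the residue of (𝔱^λ)^{−1}(k). -/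

import Mathlib

/-!
Combinatorial framework for multipartitions, Young diagrams, residues, tableaux and shapes,
following the conventions of the paper (with rows, columns and components 0-indexed).
-/

namespace CarterPayne

/-- A node `(m, r, c)`: component `m`, row `r`, column `c` (all 0-indexed). -/
abbrev Node (ℓ : ℕ) := Fin ℓ × ℕ × ℕ

/-- The lexicographic order on nodes, by component, then row, then column. -/
def nodeLt {ℓ : ℕ} (N N' : Node ℓ) : Prop :=
  N.1 < N'.1 ∨ (N.1 = N'.1 ∧ (N.2.1 < N'.2.1 ∨ (N.2.1 = N'.2.1 ∧ N.2.2 < N'.2.2)))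

/-- The residue of a node `(m, r, c)` is `c - r + κ m ∈ ℤ/eℤ`. -/
def res {ℓ : ℕ} (e : ℕ) (κ : Fin ℓ → ZMod e) (N : Node ℓ) : ZMod e :=
  (N.2.2 : ZMod e) - (N.2.1 : ZMod e) + κ N.1

/-- `f : ℕ → ℕ` is a partition: weakly decreasing, eventually zero. -/
def IsPartitionFun (f : ℕ → ℕ) : Prop :=
  (∀ i j : ℕ, i ≤ j → f j ≤ f i) ∧ ∃ B : ℕ, ∀ i : ℕ, B ≤ i → f i = 0

/-- A multipartition: each component is a partition. -/
def IsMultipartition {ℓ : ℕ} (lam : Fin ℓ → ℕ → ℕ) : Prop :=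
  ∀ m : Fin ℓ, IsPartitionFun (lam m)

/-- The Young diagram of a multipartition. -/
def diagram {ℓ : ℕ} (lam : Fin ℓ → ℕ → ℕ) : Set (Node ℓ) :=
  {N | N.2.2 < lam N.1 N.2.1}

/-- A multipartition of `n`. -/
def IsMultipartitionOf {ℓ : ℕ} (n : ℕ) (lam : Fin ℓ → ℕ → ℕ) : Prop :=
  IsMultipartition lam ∧ (diagram lam).ncard = n

/-- The size of the `m`-th component. -/
noncomputable def compSize {ℓ : ℕ} (lam : Fin ℓ → ℕ → ℕ) (m : Fin ℓ) : ℕ :=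
  ∑ᶠ r : ℕ, lam m r

/-- The partial sums appearing in the dominance order. -/
noncomputable def domSum {ℓ : ℕ} (lam : Fin ℓ → ℕ → ℕ) (m : Fin ℓ) (r : ℕ) : ℕ :=
  (∑ i ∈ Finset.univ.filter (fun i : Fin ℓ => i < m), compSize lam i) +
    ∑ j ∈ Finset.range (r + 1), lam m j

/-- The dominance order on multipartitions. -/
def Dominates {ℓ : ℕ} (mu lam : Fin ℓ → ℕ → ℕ) : Prop :=
  ∀ (m : Fin ℓ) (r : ℕ), domSum lam m r ≤ domSum mu m r

/-- `D` is the Young diagram of some multipartition. -/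
def IsMPDiagram {ℓ : ℕ} (D : Set (Node ℓ)) : Prop :=
  ∃ lam : Fin ℓ → ℕ → ℕ, IsMultipartition lam ∧ diagram lam = D

/-- `N` is an addable node of the diagram `D`. -/
def IsAddableFor {ℓ : ℕ} (D : Set (Node ℓ)) (N : Node ℓ) : Prop :=
  N ∉ D ∧ IsMPDiagram (insert N D)

/-- `N` is a removable node of the diagram `D`. -/
def IsRemovableFor {ℓ : ℕ} (D : Set (Node ℓ)) (N : Node ℓ) : Prop :=
  N ∈ D ∧ IsMPDiagram (D \ {N})

/-- `t` is a tableau of the diagram `D` with entries `{1, …, n}`. -/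
def IsTableau {ℓ : ℕ} (n : ℕ) (D : Set (Node ℓ)) (t : Node ℓ → ℕ) : Prop :=
  Set.BijOn t D (Set.Icc 1 n)

/-- Entries increase along rows and down columns (within `D`). -/
def RowColIncreasing {ℓ : ℕ} (D : Set (Node ℓ)) (t : Node ℓ → ℕ) : Prop :=
  (∀ N ∈ D, ((N.1, N.2.1, N.2.2 + 1) : Node ℓ) ∈ D → t N < t (N.1, N.2.1, N.2.2 + 1)) ∧
  (∀ N ∈ D, ((N.1, N.2.1 + 1, N.2.2) : Node ℓ) ∈ D → t N < t (N.1, N.2.1 + 1, N.2.2))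

/-- A standard tableau of the diagram `D` with entries `{1, …, n}`. -/
def IsStandardTableau {ℓ : ℕ} (n : ℕ) (D : Set (Node ℓ)) (t : Node ℓ → ℕ) : Prop :=
  IsTableau n D t ∧ RowColIncreasing D t

/-- The initial tableau `𝔱^λ`, filling the nodes of `[λ]` in lexicographic order. -/
noncomputable def initTab {ℓ : ℕ} (lam : Fin ℓ → ℕ → ℕ) (N : Node ℓ) : ℕ :=
  1 + Set.ncard {N' ∈ diagram lam | nodeLt N' N}

/-- The tableau `𝔱_λ^ν`: agrees with `𝔱^λ` on `[λ]` and fills `[ν] \ [λ]` with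
`n+1, n+2, …` in lexicographic order. -/
noncomputable def extTab {ℓ : ℕ} (lam nu : Fin ℓ → ℕ → ℕ) (N : Node ℓ) : ℕ :=
  haveI := Classical.propDecidable (N ∈ diagram lam)
  if N ∈ diagram lam then initTab lam N
  else (diagram lam).ncard + 1 +
    Set.ncard {N' ∈ diagram nu \ diagram lam | nodeLt N' N}

/-- The straight shape with underlying partition `f` anchored at the node `N₀`
(so that `N₀` is its top-left node when `f 0 > 0`). -/
def anchoredShape {ℓ : ℕ} (N₀ : Node ℓ) (f : ℕ → ℕ) : Set (Node ℓ) :=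
  {N | ∃ x y : ℕ, y < f x ∧ N = (N₀.1, N₀.2.1 + x, N₀.2.2 + y)}

/-- A (nonempty) straight shape: a translate of the Young diagram of a partition. -/
def IsStraightShape {ℓ : ℕ} (S : Set (Node ℓ)) : Prop :=
  ∃ (N₀ : Node ℓ) (f : ℕ → ℕ), IsPartitionFun f ∧ 0 < f 0 ∧ S = anchoredShape N₀ f

/-- Diagrams reachable from `D₀` by successively removing removable nodes. -/
inductive Reached {ℓ : ℕ} : Set (Node ℓ) → Set (Node ℓ) → Prop
  | refl (D : Set (Node ℓ)) : Reached D D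
  | step (D₀ D : Set (Node ℓ)) (N : Node ℓ) :
      Reached D₀ D → IsMPDiagram D → IsRemovableFor D N → Reached D₀ (D \ {N})

/-- `S` is a removable set of nodes of `[ν]`: `[ν] \ S` is reached from `[ν]` by
successively removing removable nodes. -/
def IsRemovableShape {ℓ : ℕ} (nu : Fin ℓ → ℕ → ℕ) (S : Set (Node ℓ)) : Prop :=
  S ⊆ diagram nu ∧ Reached (diagram nu) (diagram nu \ S)

/-- `S` is `e`-small: its residues do not exhaust `ℤ/eℤ`. -/
def ESmall {ℓ : ℕ} (e : ℕ) (κ : Fin ℓ → ZMod e) (S : Set (Node ℓ)) : Prop :=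
  ∃ i : ZMod e, ∀ N ∈ S, res e κ N ≠ i

/-- Every node of `S` precedes every node of `T`. -/
def ShapePrec {ℓ : ℕ} (S T : Set (Node ℓ)) : Prop :=
  ∀ N ∈ S, ∀ N' ∈ T, nodeLt N N'

/-- `S` is a subshape of `T`: both are straight shapes, the underlying partition of `S`
is contained in that of `T`, and the residues of their top-left nodes agree. -/
def IsSubshapeOf {ℓ : ℕ} (e : ℕ) (κ : Fin ℓ → ZMod e) (S T : Set (Node ℓ)) : Prop :=
  ∃ (N₀ N₁ : Node ℓ) (f g : ℕ → ℕ),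
    IsPartitionFun f ∧ IsPartitionFun g ∧ 0 < f 0 ∧ 0 < g 0 ∧
    S = anchoredShape N₀ f ∧ T = anchoredShape N₁ g ∧
    (∀ x : ℕ, f x ≤ g x) ∧ res e κ N₀ = res e κ N₁

/-- `σ` exchanges the two sets `X` and `Y` of natural numbers in increasing order,
fixing everything else. -/
def SwapsInOrder (σ : Equiv.Perm ℕ) (X Y : Set ℕ) : Prop :=
  (∀ k : ℕ, k ∉ X ∪ Y → σ k = k) ∧ Set.BijOn σ X Y ∧ Set.BijOn σ Y X ∧
  (∀ x ∈ X, ∀ y ∈ X, x < y → σ x < σ y) ∧ (∀ x ∈ Y, ∀ y ∈ Y, x < y → σ x < σ y)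

/-- The integer `d_N(D)` for a node `N` of a diagram `D`: the number of addable nodes of
`D` with the same residue as `N` which are greater than `N`, minus the number of removable
nodes of `D` with the same residue as `N` which are greater than `N`. -/
noncomputable def dVal {ℓ : ℕ} (e : ℕ) (κ : Fin ℓ → ZMod e) (D : Set (Node ℓ))
    (N : Node ℓ) : ℤ :=
  (Set.ncard {A : Node ℓ | IsAddableFor D A ∧ res e κ A = res e κ N ∧ nodeLt N A} : ℤ) -
  (Set.ncard {A : Node ℓ | IsRemovableFor D A ∧ res e κ A = res e κ N ∧ nodeLt N A} : ℤ)

/-- The degree of a standard tableau `t` of the diagram `D`: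
`deg t = ∑_{N ∈ D} d_N({N' ∈ D | t N' ≤ t N})`, the closed form of the recursion
`deg 𝔱 = deg 𝔱↓(n-1) + d_{𝔱⁻¹(n)}(Shape 𝔱)`. -/
noncomputable def degTab {ℓ : ℕ} (e : ℕ) (κ : Fin ℓ → ZMod e) (D : Set (Node ℓ))
    (t : Node ℓ → ℕ) : ℤ :=
  ∑ᶠ N ∈ D, dVal e κ {N' ∈ D | t N' ≤ t N} N

/-- The lexicographic order on the (component, row) pairs of nodes. -/
def rowPairLt {ℓ : ℕ} (N N' : Node ℓ) : Prop :=
  N.1 < N'.1 ∨ (N.1 = N'.1 ∧ N.2.1 < N'.2.1)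

/-- The corresponding weak order on (component, row) pairs. -/
def rowPairLe {ℓ : ℕ} (N N' : Node ℓ) : Prop :=
  rowPairLt N N' ∨ (N.1 = N'.1 ∧ N.2.1 = N'.2.1)

/-- The rank of a straight shape with underlying partition `f`: the number of nodes on
the diagonal through its top-left node. -/
noncomputable def rankOf (f : ℕ → ℕ) : ℕ :=
  Set.ncard {i : ℕ | i < f i}

/-- A removable `e`-small straight shape of `[ν]` which is a subshape of `[μ*]` and lies
strictly between `[μ*]` and `[λ*]` in the node order. -/
def MiddleShape {ℓ : ℕ} (e : ℕ) (κ : Fin ℓ → ZMod e) (nu : Fin ℓ → ℕ → ℕ)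
    (mustar lamstar S : Set (Node ℓ)) : Prop :=
  IsStraightShape S ∧ IsRemovableShape nu S ∧ ESmall e κ S ∧
    IsSubshapeOf e κ S mustar ∧ ShapePrec mustar S ∧ ShapePrec S lamstar

/-- A maximal (under inclusion) middle shape. -/
def MaximalMiddleShape {ℓ : ℕ} (e : ℕ) (κ : Fin ℓ → ZMod e) (nu : Fin ℓ → ℕ → ℕ)
    (mustar lamstar S : Set (Node ℓ)) : Prop :=
  MiddleShape e κ nu mustar lamstar S ∧
    ∀ S' : Set (Node ℓ), MiddleShape e κ nu mustar lamstar S' → S ⊆ S' → S' = S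

end CarterPayne

/-! ### Auxiliary infrastructure -/

namespace CPAux
open CarterPayne

variable {ℓ : ℕ}

lemma nodeLt_val (a b : Node ℓ) : nodeLt a b ↔
    ((a.1 : ℕ) < (b.1 : ℕ) ∨ ((a.1 : ℕ) = (b.1 : ℕ) ∧
      (a.2.1 < b.2.1 ∨ (a.2.1 = b.2.1 ∧ a.2.2 < b.2.2)))) := by
  simp only [nodeLt, Fin.lt_def, Fin.ext_iff]

lemma nodeLt_irrefl (N : Node ℓ) : ¬ nodeLt N N := by
  rw [nodeLt_val]; omega

lemma nodeLt_trans {a b c : Node ℓ} (h1 : nodeLt a b) (h2 : nodeLt b c) : nodeLt a c := by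
  rw [nodeLt_val] at *; omega

lemma nodeLt_trichotomy (a b : Node ℓ) : nodeLt a b ∨ a = b ∨ nodeLt b a := by
  have h : a = b ↔ ((a.1 : ℕ) = (b.1 : ℕ) ∧ a.2.1 = b.2.1 ∧ a.2.2 = b.2.2) := by
    constructor
    · rintro rfl; exact ⟨rfl, rfl, rfl⟩
    · rintro ⟨h1, h2, h3⟩
      exact Prod.ext (Fin.ext h1) (Prod.ext h2 h3)
  rw [nodeLt_val, nodeLt_val, h]; omega

lemma nodeLt_asymm {a b : Node ℓ} (h : nodeLt a b) : ¬ nodeLt b a := by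
  rw [nodeLt_val] at *; omega

/-! #### Rank of a node inside a finite set of nodes -/

noncomputable def rk (S : Set (Node ℓ)) (N : Node ℓ) : ℕ :=
  1 + Set.ncard {N' ∈ S | nodeLt N' N}

lemma rk_lt_rk {S : Set (Node ℓ)} (hS : S.Finite) {a b : Node ℓ}
    (ha : a ∈ S) (hab : nodeLt a b) : rk S a < rk S b := by
  have hsub : {N' ∈ S | nodeLt N' a} ⊂ {N' ∈ S | nodeLt N' b} := by
    constructor
    · rintro x ⟨hx, hxa⟩; exact ⟨hx, nodeLt_trans hxa hab⟩
    · intro hcon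
      exact (nodeLt_irrefl a) (hcon ⟨ha, hab⟩).2
  have := Set.ncard_lt_ncard hsub (hS.subset (fun x hx => hx.1))
  simpa [rk] using this

lemma rk_mem {S : Set (Node ℓ)} (hS : S.Finite) {a : Node ℓ} (ha : a ∈ S) :
    rk S a ∈ Set.Icc 1 S.ncard := by
  constructor
  · simp [rk]
  · have hsub : {N' ∈ S | nodeLt N' a} ⊆ S \ {a} := by
      rintro x ⟨hx, hxa⟩
      refine ⟨hx, ?_⟩
      rintro rfl
      exact nodeLt_irrefl _ hxa
    have h1 : Set.ncard {N' ∈ S | nodeLt N' a} ≤ (S \ {a}).ncard :=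
      Set.ncard_le_ncard hsub (hS.subset Set.diff_subset)
    have h2 : (S \ {a}).ncard = S.ncard - 1 := Set.ncard_diff_singleton_of_mem ha
    have h3 : 1 ≤ S.ncard := by
      have : 0 < S.ncard := (Set.ncard_pos hS).mpr ⟨a, ha⟩
      omega
    simp only [rk]; omega

lemma ncard_Icc (a b : ℕ) : (Set.Icc a b).ncard = b + 1 - a := by
  rw [← Finset.coe_Icc, Set.ncard_coe_finset, Nat.card_Icc]

lemma rk_bijOn {S : Set (Node ℓ)} (hS : S.Finite) :
    Set.BijOn (rk S) S (Set.Icc 1 S.ncard) := by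
  have hinj : Set.InjOn (rk S) S := by
    intro a ha b hb hab
    rcases nodeLt_trichotomy a b with h | h | h
    · exact absurd hab (Nat.ne_of_lt (rk_lt_rk hS ha h))
    · exact h
    · exact absurd hab.symm (Nat.ne_of_lt (rk_lt_rk hS hb h))
  have hmaps : Set.MapsTo (rk S) S (Set.Icc 1 S.ncard) := fun a ha => rk_mem hS ha
  refine ⟨hmaps, hinj, ?_⟩
  have himg : rk S '' S ⊆ Set.Icc 1 S.ncard := Set.image_subset_iff.mpr hmaps
  have hcard : (Set.Icc 1 S.ncard).ncard ≤ (rk S '' S).ncard := by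
    rw [Set.ncard_image_of_injOn hinj, ncard_Icc]
    omega
  have heq := Set.eq_of_subset_of_ncard_le himg hcard
    ((Set.finite_Icc 1 S.ncard))
  rw [Set.SurjOn, ← heq]

/-! #### The lexicographic linear order on nodes -/

def nlE : Node ℓ ≃ (Fin ℓ ×ₗ (ℕ ×ₗ ℕ)) :=
  (Equiv.prodCongr (Equiv.refl _) toLex).trans toLex

lemma nlE_lt_iff (a b : Node ℓ) : nlE a < nlE b ↔ nodeLt a b := by
  show toLex (a.1, toLex a.2) < toLex (b.1, toLex b.2) ↔ _
  rw [Prod.Lex.lt_iff]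
  simp only [Prod.Lex.lt_iff]
  constructor
  · rintro (h | ⟨h1, h2 | h2⟩)
    · exact Or.inl h
    · exact Or.inr ⟨h1, Or.inl h2⟩
    · exact Or.inr ⟨h1, Or.inr h2⟩
  · rintro (h | ⟨h1, h2 | ⟨h2, h3⟩⟩)
    · exact Or.inl h
    · exact Or.inr ⟨h1, Or.inl h2⟩
    · exact Or.inr ⟨h1, Or.inr ⟨h2, h3⟩⟩

/-- Two strictly `nodeLt`-monotone maps from a finite set `S` of nodes into a finite set
`Y ⊆ ℕ` of the same cardinality must coincide on `S`. -/
lemma eqOn_of_strictMono {S : Set (Node ℓ)} (hS : S.Finite) {Y : Set ℕ} (hY : Y.Finite)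
    (hcard : S.ncard = Y.ncard) {f g : Node ℓ → ℕ}
    (hfm : ∀ a ∈ S, ∀ b ∈ S, nodeLt a b → f a < f b) (hfY : ∀ a ∈ S, f a ∈ Y)
    (hgm : ∀ a ∈ S, ∀ b ∈ S, nodeLt a b → g a < g b) (hgY : ∀ a ∈ S, g a ∈ Y) :
    ∀ a ∈ S, f a = g a := by
  classical
  have hS' : (nlE '' S).Finite := hS.image _
  set S' : Finset (Fin ℓ ×ₗ (ℕ ×ₗ ℕ)) := hS'.toFinset with hS'def
  set YF : Finset ℕ := hY.toFinset with hYFdef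
  have hmemS' : ∀ x, x ∈ S' ↔ x ∈ nlE '' S := fun x => hS'.mem_toFinset
  have hmemYF : ∀ x, x ∈ YF ↔ x ∈ Y := fun x => hY.mem_toFinset
  have hcardS' : S'.card = YF.card := by
    rw [← Set.ncard_coe_finset, ← Set.ncard_coe_finset, Set.Finite.coe_toFinset,
      Set.Finite.coe_toFinset, Set.ncard_image_of_injective _ (nlE (ℓ := ℓ)).injective, hcard]
  have key : ∀ (h : Node ℓ → ℕ), (∀ a ∈ S, ∀ b ∈ S, nodeLt a b → h a < h b) →
      (∀ a ∈ S, h a ∈ Y) →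
      (fun i => h (nlE.symm (S'.orderEmbOfFin rfl i))) = YF.orderEmbOfFin hcardS'.symm := by
    intro h hm hY'
    apply Finset.orderEmbOfFin_unique
    · intro i
      rw [hmemYF]
      apply hY'
      have := Finset.orderEmbOfFin_mem S' rfl i
      rw [hmemS'] at this
      obtain ⟨a, ha, hae⟩ := this
      rw [← hae, Equiv.symm_apply_apply]; exact ha
    · intro i j hij
      have hlt := (Finset.orderEmbOfFin S' rfl).strictMono hij
      have hi := Finset.orderEmbOfFin_mem S' rfl i
      have hj := Finset.orderEmbOfFin_mem S' rfl j
      rw [hmemS'] at hi hj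
      obtain ⟨a, ha, hae⟩ := hi
      obtain ⟨b, hb, hbe⟩ := hj
      have ha' : nlE.symm (S'.orderEmbOfFin rfl i) = a := by
        rw [← hae, Equiv.symm_apply_apply]
      have hb' : nlE.symm (S'.orderEmbOfFin rfl j) = b := by
        rw [← hbe, Equiv.symm_apply_apply]
      show h (nlE.symm (S'.orderEmbOfFin rfl i)) < h (nlE.symm (S'.orderEmbOfFin rfl j))
      rw [ha', hb']
      apply hm a ha b hb
      rw [← nlE_lt_iff, hae, hbe]
      exact hlt
  have hfg : (fun i => f (nlE.symm (S'.orderEmbOfFin rfl i))) =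
      (fun i => g (nlE.symm (S'.orderEmbOfFin rfl i))) := by
    rw [key f hfm hfY, key g hgm hgY]
  intro a ha
  have haS' : nlE a ∈ S' := by rw [hmemS']; exact ⟨a, ha, rfl⟩
  have : ∃ i, S'.orderEmbOfFin rfl i = nlE a := by
    have : (nlE a : Fin ℓ ×ₗ (ℕ ×ₗ ℕ)) ∈ Set.range (S'.orderEmbOfFin rfl) := by
      rw [Finset.range_orderEmbOfFin]; exact_mod_cast haS'
    exact this
  obtain ⟨i, hi⟩ := this
  have hfa := congrFun hfg i
  simpa [hi, Equiv.symm_apply_apply] using hfa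


/-! #### Anchored shapes and translations -/

def trOff (A B : Node ℓ) (N : Node ℓ) : Node ℓ :=
  (B.1, B.2.1 + (N.2.1 - A.2.1), B.2.2 + (N.2.2 - A.2.2))

lemma mem_anchoredShape {A N : Node ℓ} {f : ℕ → ℕ} :
    N ∈ anchoredShape A f ↔
      N.1 = A.1 ∧ A.2.1 ≤ N.2.1 ∧ A.2.2 ≤ N.2.2 ∧ N.2.2 - A.2.2 < f (N.2.1 - A.2.1) := by
  obtain ⟨m, r, c⟩ := N
  obtain ⟨m₀, r₀, c₀⟩ := A
  simp only [anchoredShape, Set.mem_setOf_eq, Prod.mk.injEq]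
  constructor
  · rintro ⟨x, y, hy, rfl, rfl, rfl⟩
    refine ⟨rfl, Nat.le_add_right _ _, Nat.le_add_right _ _, ?_⟩
    simpa using hy
  · rintro ⟨rfl, h2, h3, h4⟩
    exact ⟨r - r₀, c - c₀, h4, rfl, by omega, by omega⟩

lemma offset_mem {A : Node ℓ} {f : ℕ → ℕ} {x y : ℕ} (h : y < f x) :
    ((A.1, A.2.1 + x, A.2.2 + y) : Node ℓ) ∈ anchoredShape A f :=
  ⟨x, y, h, rfl⟩

lemma offset_mem_iff {A : Node ℓ} {f : ℕ → ℕ} {x y : ℕ} :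
    ((A.1, A.2.1 + x, A.2.2 + y) : Node ℓ) ∈ anchoredShape A f ↔ y < f x := by
  rw [mem_anchoredShape]
  simp

lemma anchoredShape_mono {A : Node ℓ} {f g : ℕ → ℕ} (h : ∀ x, f x ≤ g x) :
    anchoredShape A f ⊆ anchoredShape A g := by
  intro N hN
  rw [mem_anchoredShape] at *
  exact ⟨hN.1, hN.2.1, hN.2.2.1, lt_of_lt_of_le hN.2.2.2 (h _)⟩

lemma anchoredShape_congr {A : Node ℓ} {f g : ℕ → ℕ} (h : ∀ x, f x = g x) :
    anchoredShape A f = anchoredShape A g :=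
  subset_antisymm (anchoredShape_mono fun x => (h x).le)
    (anchoredShape_mono fun x => (h x).ge)

lemma anchor_mem {A : Node ℓ} {f : ℕ → ℕ} (hf0 : 0 < f 0) : A ∈ anchoredShape A f :=
  mem_anchoredShape.mpr ⟨rfl, le_rfl, le_rfl, by simpa using hf0⟩

lemma anchoredShape_uniq {A B : Node ℓ} {f g : ℕ → ℕ}
    (hf0 : 0 < f 0) (hg0 : 0 < g 0)
    (h : anchoredShape A f = anchoredShape B g) : A = B ∧ ∀ x, f x = g x := by
  have hA : A ∈ anchoredShape B g := h ▸ anchor_mem hf0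
  have hB : B ∈ anchoredShape A f := h.symm ▸ anchor_mem hg0
  rw [mem_anchoredShape] at hA hB
  have hAB : A = B :=
    Prod.ext hA.1 (Prod.ext (le_antisymm hB.2.1 hA.2.1) (le_antisymm hB.2.2.1 hA.2.2.1))
  subst hAB
  refine ⟨rfl, fun x => ?_⟩
  have hle : ∀ (f' g' : ℕ → ℕ), anchoredShape A f' = anchoredShape A g' →
      f' x ≤ g' x := by
    intro f' g' hfg
    rcases Nat.eq_zero_or_pos (f' x) with h0 | h0
    · omega
    · have hmem : ((A.1, A.2.1 + x, A.2.2 + (f' x - 1)) : Node ℓ) ∈ anchoredShape A f' :=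
        offset_mem (by omega)
      rw [hfg, offset_mem_iff] at hmem
      omega
  exact le_antisymm (hle f g h) (hle g f h.symm)

lemma trOff_offset (A B : Node ℓ) (x y : ℕ) :
    trOff A B ((A.1, A.2.1 + x, A.2.2 + y) : Node ℓ) = (B.1, B.2.1 + x, B.2.2 + y) := by
  simp [trOff]

lemma trOff_mem {A B : Node ℓ} {f : ℕ → ℕ} {N : Node ℓ} (h : N ∈ anchoredShape A f) :
    trOff A B N ∈ anchoredShape B f := by
  obtain ⟨x, y, hy, rfl⟩ := h
  rw [trOff_offset]
  exact offset_mem hy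

lemma trOff_trOff {A B : Node ℓ} {f : ℕ → ℕ} {N : Node ℓ} (h : N ∈ anchoredShape A f) :
    trOff B A (trOff A B N) = N := by
  obtain ⟨x, y, hy, rfl⟩ := h
  rw [trOff_offset, trOff_offset]

lemma trOff_lt {A B : Node ℓ} {f : ℕ → ℕ} {N N' : Node ℓ}
    (h : N ∈ anchoredShape A f) (h' : N' ∈ anchoredShape A f) (hlt : nodeLt N N') :
    nodeLt (trOff A B N) (trOff A B N') := by
  obtain ⟨x, y, hy, rfl⟩ := h
  obtain ⟨x', y', hy', rfl⟩ := h'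
  obtain ⟨Am, Ar, Ac⟩ := A
  obtain ⟨Bm, Br, Bc⟩ := B
  rw [trOff_offset, trOff_offset]
  rw [nodeLt_val] at *
  dsimp only at *
  omega

lemma trOff_res {e : ℕ} {κ : Fin ℓ → ZMod e} {A B : Node ℓ} {f : ℕ → ℕ} {N : Node ℓ}
    (h : N ∈ anchoredShape A f) :
    res e κ (trOff A B N) = res e κ N + res e κ B - res e κ A := by
  obtain ⟨x, y, hy, rfl⟩ := h
  rw [trOff_offset]
  simp only [res]
  push_cast
  ring

lemma image_trOff {A B : Node ℓ} {f : ℕ → ℕ} :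
    trOff A B '' anchoredShape A f = anchoredShape B f := by
  apply subset_antisymm
  · rintro _ ⟨N, hN, rfl⟩
    exact trOff_mem hN
  · intro N hN
    obtain ⟨x, y, hy, rfl⟩ := hN
    exact ⟨(A.1, A.2.1 + x, A.2.2 + y), offset_mem hy, trOff_offset A B x y⟩

lemma injOn_trOff {A B : Node ℓ} {f : ℕ → ℕ} :
    Set.InjOn (trOff A B) (anchoredShape A f) := by
  intro a ha b hb hab
  rw [← trOff_trOff (B := B) ha, ← trOff_trOff (B := B) hb, hab]

lemma ncard_anchoredShape_eq {A B : Node ℓ} {f : ℕ → ℕ} :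
    (anchoredShape A f).ncard = (anchoredShape B f).ncard := by
  rw [← image_trOff (A := A) (B := B) (f := f), Set.ncard_image_of_injOn injOn_trOff]

lemma mem_of_left {A : Node ℓ} {f : ℕ → ℕ} {N : Node ℓ} (hcol : A.2.2 ≤ N.2.2)
    (h : ((N.1, N.2.1, N.2.2 + 1) : Node ℓ) ∈ anchoredShape A f) :
    N ∈ anchoredShape A f := by
  rw [mem_anchoredShape] at *
  obtain ⟨h1, h2, h3, h4⟩ := h
  simp only at *
  exact ⟨h1, h2, hcol, by omega⟩

lemma mem_of_up {A : Node ℓ} {f : ℕ → ℕ} (hf : IsPartitionFun f) {N : Node ℓ}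
    (hrow : A.2.1 ≤ N.2.1)
    (h : ((N.1, N.2.1 + 1, N.2.2) : Node ℓ) ∈ anchoredShape A f) :
    N ∈ anchoredShape A f := by
  rw [mem_anchoredShape] at *
  obtain ⟨h1, h2, h3, h4⟩ := h
  simp only at *
  have heq : N.2.1 + 1 - A.2.1 = (N.2.1 - A.2.1) + 1 := by omega
  rw [heq] at h4
  have := hf.1 (N.2.1 - A.2.1) (N.2.1 - A.2.1 + 1) (by omega)
  exact ⟨h1, hrow, h3, by omega⟩

/-! #### Diagrams -/

lemma diagram_finite {lam : Fin ℓ → ℕ → ℕ} (h : IsMultipartition lam) :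
    (diagram lam).Finite := by
  classical
  choose B hB using fun m => (h m).2
  set Rb := Finset.univ.sup B with hRb
  set Cb := Finset.univ.sup (fun m => lam m 0) with hCb
  apply Set.Finite.subset
    (Set.Finite.prod (Set.finite_univ (α := Fin ℓ))
      (Set.Finite.prod (Set.finite_Iio Rb) (Set.finite_Iio Cb)))
  rintro ⟨m, r, c⟩ hm
  have hc : c < lam m r := hm
  have hr : r < Rb := by
    by_contra hcon
    have : B m ≤ r := le_trans (Finset.le_sup (Finset.mem_univ m)) (by omega)
    have := hB m r this
    omega
  have hcc : c < Cb := by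
    have h1 : lam m r ≤ lam m 0 := (h m).1 0 r (Nat.zero_le r)
    have h2 : lam m 0 ≤ Cb := Finset.le_sup (f := fun m => lam m 0) (Finset.mem_univ m)
    omega
  exact ⟨Set.mem_univ m, hr, hcc⟩

lemma diagram_left {lam : Fin ℓ → ℕ → ℕ} {m : Fin ℓ} {r c : ℕ}
    (h : ((m, r, c + 1) : Node ℓ) ∈ diagram lam) : ((m, r, c) : Node ℓ) ∈ diagram lam := by
  simp only [diagram, Set.mem_setOf_eq] at *
  omega

lemma diagram_up {lam : Fin ℓ → ℕ → ℕ} (hl : IsMultipartition lam) {m : Fin ℓ} {r c : ℕ}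
    (h : ((m, r + 1, c) : Node ℓ) ∈ diagram lam) : ((m, r, c) : Node ℓ) ∈ diagram lam := by
  simp only [diagram, Set.mem_setOf_eq] at *
  have := (hl m).1 r (r + 1) (by omega)
  omega

lemma reached_diagram {D₀ D : Set (Node ℓ)} (h : Reached D₀ D) :
    D = D₀ ∨ IsMPDiagram D := by
  cases h with
  | refl => exact Or.inl rfl
  | step D N hr hD hrem => exact Or.inr hrem.2

/-! #### Iterating the node exchange maps -/

def iterFin : (n : ℕ) → (Fin n → Node ℓ → Node ℓ) → Node ℓ → Node ℓ
  | 0, _, N => N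
  | n+1, ms, N => ms (Fin.last n) (iterFin n (fun i => ms i.castSucc) N)

lemma iterFin_mem {W : Set (Node ℓ)} :
    ∀ (n : ℕ) (ms : Fin n → Node ℓ → Node ℓ),
      (∀ k, ∀ N ∈ W, ms k N ∈ W) → ∀ N ∈ W, iterFin n ms N ∈ W := by
  intro n
  induction n with
  | zero => intro ms _ N hN; exact hN
  | succ n ih =>
    intro ms hms N hN
    exact hms _ _ (ih _ (fun k => hms k.castSucc) N hN)

lemma iterFin_invariant {W : Set (Node ℓ)} {β : Sort*} (g : Node ℓ → β) :
    ∀ (n : ℕ) (ms : Fin n → Node ℓ → Node ℓ),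
      (∀ k, ∀ N ∈ W, ms k N ∈ W) → (∀ k, ∀ N ∈ W, g (ms k N) = g N) →
      ∀ N ∈ W, g (iterFin n ms N) = g N := by
  intro n
  induction n with
  | zero => intro ms _ _ N hN; rfl
  | succ n ih =>
    intro ms hmem hinv N hN
    have h1 := ih _ (fun k => hmem k.castSucc) (fun k => hinv k.castSucc) N hN
    have h2 : iterFin n (fun i => ms i.castSucc) N ∈ W :=
      iterFin_mem n _ (fun k => hmem k.castSucc) N hN
    calc g (iterFin (n+1) ms N) = g (iterFin n (fun i => ms i.castSucc) N) :=
          hinv (Fin.last n) _ h2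
      _ = g N := h1

lemma prod_conj (T : Node ℓ → ℕ) (W : Set (Node ℓ)) :
    ∀ (n : ℕ) (σs : Fin n → Equiv.Perm ℕ) (ms : Fin n → Node ℓ → Node ℓ),
      (∀ k, ∀ N ∈ W, σs k (T N) = T (ms k N)) → (∀ k, ∀ N ∈ W, ms k N ∈ W) →
      ∀ N ∈ W, ((List.ofFn σs).reverse.prod) (T N) = T (iterFin n ms N) := by
  intro n
  induction n with
  | zero =>
    intro σs ms _ _ N hN
    simp [iterFin]
  | succ n ih =>
    intro σs ms hconj hmem N hN
    have hinner := ih (fun i => σs i.castSucc) (fun i => ms i.castSucc)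
      (fun k => hconj k.castSucc) (fun k => hmem k.castSucc) N hN
    have hmem' : iterFin n (fun i => ms i.castSucc) N ∈ W :=
      iterFin_mem n _ (fun k => hmem k.castSucc) N hN
    rw [List.ofFn_succ']
    show ((List.ofFn fun i => σs i.castSucc).concat (σs (Fin.last n))).reverse.prod (T N) =
      T (iterFin (n+1) ms N)
    rw [List.concat_eq_append, List.reverse_concat, List.prod_cons]
    rw [Equiv.Perm.mul_apply, hinner]
    exact hconj (Fin.last n) _ hmem'

lemma iterFin_fixed : ∀ (n : ℕ) (ms : Fin n → Node ℓ → Node ℓ) (N : Node ℓ),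
    (∀ k, ms k N = N) → iterFin n ms N = N := by
  intro n
  induction n with
  | zero => intro ms N _; rfl
  | succ n ih =>
    intro ms N h
    show ms (Fin.last n) (iterFin n (fun i => ms i.castSucc) N) = N
    rw [ih _ N (fun k => h k.castSucc)]
    exact h _

lemma iterFin_single : ∀ (n : ℕ) (ms : Fin n → Node ℓ → Node ℓ) (N M : Node ℓ)
    (k₀ : Fin n), (∀ k, k < k₀ → ms k N = N) → ms k₀ N = M →
    (∀ k, k₀ < k → ms k M = M) → iterFin n ms N = M := by
  intro n
  induction n with
  | zero => intro ms N M k₀; exact absurd k₀.2 (by omega)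
  | succ n ih =>
    intro ms N M k₀ h1 h2 h3
    by_cases hk : k₀ = Fin.last n
    · subst hk
      show ms (Fin.last n) (iterFin n (fun i => ms i.castSucc) N) = M
      rw [iterFin_fixed n _ N (fun k => h1 _ (Fin.castSucc_lt_last k))]
      exact h2
    · obtain ⟨k₀', rfl⟩ := Fin.exists_castSucc_eq.mpr hk
      show ms (Fin.last n) (iterFin n (fun i => ms i.castSucc) N) = M
      rw [ih _ N M k₀' (fun k hkk => h1 _ (by exact_mod_cast Fin.castSucc_lt_castSucc_iff.mpr hkk)) h2
        (fun k hkk => h3 _ (by exact_mod_cast Fin.castSucc_lt_castSucc_iff.mpr hkk))]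
      exact h3 _ (Fin.castSucc_lt_last k₀')

lemma iterFin_double : ∀ (n : ℕ) (ms : Fin n → Node ℓ → Node ℓ) (N M M' : Node ℓ)
    (k₀ k₁ : Fin n), k₀ < k₁ → (∀ k, k < k₀ → ms k N = N) → ms k₀ N = M →
    (∀ k, k₀ < k → k < k₁ → ms k M = M) → ms k₁ M = M' →
    (∀ k, k₁ < k → ms k M' = M') → iterFin n ms N = M' := by
  intro n
  induction n with
  | zero => intro ms N M M' k₀; exact absurd k₀.2 (by omega)
  | succ n ih =>
    intro ms N M M' k₀ k₁ h01 h1 h2 h3 h4 h5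
    have hk₀ : k₀ ≠ Fin.last n := by
      intro hcon
      subst hcon
      exact absurd h01 (not_lt.mpr (Fin.le_last k₁))
    obtain ⟨k₀', rfl⟩ := Fin.exists_castSucc_eq.mpr hk₀
    by_cases hk : k₁ = Fin.last n
    · subst hk
      show ms (Fin.last n) (iterFin n (fun i => ms i.castSucc) N) = M'
      rw [iterFin_single n _ N M k₀'
        (fun k hkk => h1 _ (by exact_mod_cast Fin.castSucc_lt_castSucc_iff.mpr hkk)) h2
        (fun k hkk => h3 _ (by exact_mod_cast Fin.castSucc_lt_castSucc_iff.mpr hkk)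
          (Fin.castSucc_lt_last k))]
      exact h4
    · obtain ⟨k₁', rfl⟩ := Fin.exists_castSucc_eq.mpr hk
      have h01' : k₀' < k₁' := by
        exact_mod_cast Fin.castSucc_lt_castSucc_iff.mp h01
      show ms (Fin.last n) (iterFin n (fun i => ms i.castSucc) N) = M'
      rw [ih _ N M M' k₀' k₁' h01'
        (fun k hkk => h1 _ (by exact_mod_cast Fin.castSucc_lt_castSucc_iff.mpr hkk)) h2
        (fun k hk1 hk2 => h3 _ (by exact_mod_cast Fin.castSucc_lt_castSucc_iff.mpr hk1)
          (by exact_mod_cast Fin.castSucc_lt_castSucc_iff.mpr hk2)) h4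
        (fun k hkk => h5 _ (by exact_mod_cast Fin.castSucc_lt_castSucc_iff.mpr hkk))]
      exact h5 _ (Fin.castSucc_lt_last k₁')

/-! #### The exchange map of a single step -/

noncomputable def stepMap (A B : Node ℓ) (f : ℕ → ℕ) (N : Node ℓ) : Node ℓ :=
  haveI := Classical.propDecidable (N ∈ anchoredShape A f)
  haveI := Classical.propDecidable (N ∈ anchoredShape B f)
  if N ∈ anchoredShape A f then trOff A B N
  else if N ∈ anchoredShape B f then trOff B A N else N

lemma stepMap_pos₁ {A B : Node ℓ} {f : ℕ → ℕ} {N : Node ℓ} (h : N ∈ anchoredShape A f) :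
    stepMap A B f N = trOff A B N := by
  simp [stepMap, h]

lemma stepMap_pos₂ {A B : Node ℓ} {f : ℕ → ℕ} {N : Node ℓ} (h1 : N ∉ anchoredShape A f)
    (h2 : N ∈ anchoredShape B f) : stepMap A B f N = trOff B A N := by
  simp [stepMap, h1, h2]

lemma stepMap_neg {A B : Node ℓ} {f : ℕ → ℕ} {N : Node ℓ} (h1 : N ∉ anchoredShape A f)
    (h2 : N ∉ anchoredShape B f) : stepMap A B f N = N := by
  simp [stepMap, h1, h2]

lemma step_conj (T : Node ℓ → ℕ) (W : Set (Node ℓ)) (hW : W.Finite) (A B : Node ℓ)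
    (fs : ℕ → ℕ)
    (hUW : anchoredShape A fs ⊆ W) (hVW : anchoredShape B fs ⊆ W)
    (hdisj : ∀ N, N ∈ anchoredShape A fs → N ∈ anchoredShape B fs → False)
    (hinj : Set.InjOn T W)
    (hmU : ∀ a ∈ anchoredShape A fs, ∀ b ∈ anchoredShape A fs, nodeLt a b → T a < T b)
    (hmV : ∀ a ∈ anchoredShape B fs, ∀ b ∈ anchoredShape B fs, nodeLt a b → T a < T b)
    (σ : Equiv.Perm ℕ)
    (hσ : SwapsInOrder σ (T '' anchoredShape A fs) (T '' anchoredShape B fs)) :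
    ∀ N ∈ W, σ (T N) = T (stepMap A B fs N) := by
  obtain ⟨hfix, hbXY, hbYX, hmX, hmY⟩ := hσ
  have hUfin : (anchoredShape A fs).Finite := hW.subset hUW
  have hVfin : (anchoredShape B fs).Finite := hW.subset hVW
  intro N hN
  by_cases hNU : N ∈ anchoredShape A fs
  · rw [stepMap_pos₁ hNU]
    refine eqOn_of_strictMono hUfin (hVfin.image T) ?_
      (f := fun N => σ (T N)) (g := fun N => T (trOff A B N)) ?_ ?_ ?_ ?_ N hNU
    · rw [Set.ncard_image_of_injOn (hinj.mono hVW)]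
      exact ncard_anchoredShape_eq
    · intro a ha b hb hab
      exact hmX _ ⟨a, ha, rfl⟩ _ ⟨b, hb, rfl⟩ (hmU a ha b hb hab)
    · intro a ha
      exact hbXY.mapsTo ⟨a, ha, rfl⟩
    · intro a ha b hb hab
      exact hmV _ (trOff_mem ha) _ (trOff_mem hb) (trOff_lt ha hb hab)
    · intro a ha
      exact ⟨trOff A B a, trOff_mem ha, rfl⟩
  · by_cases hNV : N ∈ anchoredShape B fs
    · rw [stepMap_pos₂ hNU hNV]
      refine eqOn_of_strictMono hVfin (hUfin.image T) ?_
        (f := fun N => σ (T N)) (g := fun N => T (trOff B A N)) ?_ ?_ ?_ ?_ N hNV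
      · rw [Set.ncard_image_of_injOn (hinj.mono hUW)]
        exact ncard_anchoredShape_eq
      · intro a ha b hb hab
        exact hmY _ ⟨a, ha, rfl⟩ _ ⟨b, hb, rfl⟩ (hmV a ha b hb hab)
      · intro a ha
        exact hbYX.mapsTo ⟨a, ha, rfl⟩
      · intro a ha b hb hab
        exact hmU _ (trOff_mem ha) _ (trOff_mem hb) (trOff_lt ha hb hab)
      · intro a ha
        exact ⟨trOff B A a, trOff_mem ha, rfl⟩
    · rw [stepMap_neg hNU hNV]
      apply hfix
      rintro (⟨u, hu, huT⟩ | ⟨v, hv, hvT⟩)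
      · exact hNU (hinj (hUW hu) hN huT ▸ hu)
      · exact hNV (hinj (hVW hv) hN hvT ▸ hv)


/-! #### The tableaux `initTab` and `extTab` -/

lemma initTab_eq (lam : Fin ℓ → ℕ → ℕ) (N : Node ℓ) :
    initTab lam N = rk (diagram lam) N := rfl

lemma extTab_pos {lam nu : Fin ℓ → ℕ → ℕ} {N : Node ℓ} (h : N ∈ diagram lam) :
    extTab lam nu N = rk (diagram lam) N := by
  unfold extTab
  split
  · rfl
  · next hc => exact absurd h hc

lemma extTab_neg {lam nu : Fin ℓ → ℕ → ℕ} {N : Node ℓ} (h : N ∉ diagram lam) :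
    extTab lam nu N = (diagram lam).ncard + rk (diagram nu \ diagram lam) N := by
  unfold extTab
  split
  · next hc => exact absurd hc h
  · simp only [rk]
    omega

lemma nb_lt {N N' : Node ℓ}
    (h : N' = ((N.1, N.2.1, N.2.2 + 1) : Node ℓ) ∨ N' = ((N.1, N.2.1 + 1, N.2.2) : Node ℓ)) :
    nodeLt N N' := by
  obtain ⟨m, r, c⟩ := N
  rcases h with rfl | rfl <;> (rw [nodeLt_val]; dsimp only; omega)

lemma trOff_nb_right {A B N : Node ℓ} {f : ℕ → ℕ} (h : N ∈ anchoredShape A f) :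
    trOff A B ((N.1, N.2.1, N.2.2 + 1) : Node ℓ) =
      (((trOff A B N).1, (trOff A B N).2.1, (trOff A B N).2.2 + 1) : Node ℓ) := by
  obtain ⟨x, y, hy, rfl⟩ := h
  have h1 : ((A.1, A.2.1 + x, A.2.2 + y).1, (A.1, A.2.1 + x, A.2.2 + y).2.1,
      (A.1, A.2.1 + x, A.2.2 + y).2.2 + 1) = ((A.1, A.2.1 + x, A.2.2 + (y + 1)) : Node ℓ) := by
    dsimp only
    rw [Nat.add_assoc]
  rw [h1, trOff_offset, trOff_offset]
  dsimp only
  rw [Nat.add_assoc]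

lemma trOff_nb_down {A B N : Node ℓ} {f : ℕ → ℕ} (h : N ∈ anchoredShape A f) :
    trOff A B ((N.1, N.2.1 + 1, N.2.2) : Node ℓ) =
      (((trOff A B N).1, (trOff A B N).2.1 + 1, (trOff A B N).2.2) : Node ℓ) := by
  obtain ⟨x, y, hy, rfl⟩ := h
  have h1 : ((A.1, A.2.1 + x, A.2.2 + y).1, (A.1, A.2.1 + x, A.2.2 + y).2.1 + 1,
      (A.1, A.2.1 + x, A.2.2 + y).2.2) = ((A.1, A.2.1 + (x + 1), A.2.2 + y) : Node ℓ) := by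
    dsimp only
    rw [Nat.add_assoc]
  rw [h1, trOff_offset, trOff_offset]
  dsimp only
  rw [Nat.add_assoc]

end CPAux


open CarterPayne in
/-- **Straight-shape Carter–Payne setup, image of the Specht generator.**
Let `λ, μ` be `ℓ`-multipartitions of `n` with `μ` strictly dominating `λ`, let
`ν = λ ∪ μ` be a multipartition of `n + γ`, and suppose `[μ*] = [ν] \ [λ]` and
`[λ*] = [ν] \ [μ]` are congruent removable `e`-small straight shapes (both with underlying
partition `fstar`, anchored at `Nmu` resp. `Nlam`, with matching residues), with every node
of `[μ*]` preceding every node of `[λ*]`.  Let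
`[μ*] = [ξ⁰] ≺ [ξ¹] ≺ ⋯ ≺ [ξ^c] = [λ*]` be the chain in which `[ξ¹], …, [ξ^{c-1}]` are the
maximal removable `e`-small straight shapes of `[ν]` that are subshapes of `[μ*]` and lie
strictly between `[μ*]` and `[λ*]`, and for `1 ≤ j ≤ c` let `σ_{μ*,ξʲ}` be the permutation
exchanging, in increasing order, the entries of `𝔱_λ^ν` on `[ξʲ]` with its entries on the
copy of `[ξʲ]` anchored at the top-left node of `[μ*]`.  Then
`𝔱*_μ = (𝔱_λ^ν σ_{μ*,ξ¹} ⋯ σ_{μ*,ξ^c})↓n` is a standard `μ`-tableau, and for every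
`k ∈ {1, …, n}` the residue of `(𝔱*_μ)⁻¹(k)` equals the residue of `(𝔱^λ)⁻¹(k)`. -/
theorem statement6 (e ℓ n γ c : ℕ) (he : 2 ≤ e) (hℓ : 1 ≤ ℓ)
    (κ : Fin ℓ → ZMod e)
    (lam mu nu : Fin ℓ → ℕ → ℕ)
    (hlam : IsMultipartitionOf n lam) (hmu : IsMultipartitionOf n mu)
    (hdom : Dominates mu lam) (hne : mu ≠ lam)
    (hnu : IsMultipartitionOf (n + γ) nu)
    (hunion : diagram nu = diagram lam ∪ diagram mu)
    (fstar : ℕ → ℕ) (Nmu Nlam : Node ℓ)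
    (hfstar : IsPartitionFun fstar) (hfstar0 : 0 < fstar 0)
    (hmustar : diagram nu \ diagram lam = anchoredShape Nmu fstar)
    (hlamstar : diagram nu \ diagram mu = anchoredShape Nlam fstar)
    (hcong : res e κ Nmu = res e κ Nlam)
    (hremM : IsRemovableShape nu (anchoredShape Nmu fstar))
    (hremL : IsRemovableShape nu (anchoredShape Nlam fstar))
    (hsmallM : ESmall e κ (anchoredShape Nmu fstar))
    (hsmallL : ESmall e κ (anchoredShape Nlam fstar))
    (hprec : ShapePrec (anchoredShape Nmu fstar) (anchoredShape Nlam fstar))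
    (fxi : Fin (c + 1) → ℕ → ℕ) (Axi : Fin (c + 1) → Node ℓ)
    (hxi : ∀ j : Fin (c + 1), IsPartitionFun (fxi j) ∧ 0 < fxi j 0)
    (hxi0 : anchoredShape (Axi 0) (fxi 0) = anchoredShape Nmu fstar)
    (hxic : anchoredShape (Axi (Fin.last c)) (fxi (Fin.last c)) = anchoredShape Nlam fstar)
    (hchain : ∀ j k : Fin (c + 1), j < k →
      ShapePrec (anchoredShape (Axi j) (fxi j)) (anchoredShape (Axi k) (fxi k)))
    (hmaximal : ∀ j : Fin (c + 1), 0 < (j : ℕ) → (j : ℕ) < c →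
      MaximalMiddleShape e κ nu (anchoredShape Nmu fstar) (anchoredShape Nlam fstar)
        (anchoredShape (Axi j) (fxi j)))
    (hallmax : ∀ S : Set (Node ℓ),
      MaximalMiddleShape e κ nu (anchoredShape Nmu fstar) (anchoredShape Nlam fstar) S →
      ∃ j : Fin (c + 1), 0 < (j : ℕ) ∧ (j : ℕ) < c ∧ S = anchoredShape (Axi j) (fxi j))
    (σ : Fin c → Equiv.Perm ℕ)
    (hσ : ∀ j : Fin c,
      SwapsInOrder (σ j) (extTab lam nu '' anchoredShape (Axi j.succ) (fxi j.succ))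
        (extTab lam nu '' anchoredShape Nmu (fxi j.succ))) :
    IsStandardTableau n (diagram mu)
      (fun N => ((List.ofFn σ).reverse.prod : Equiv.Perm ℕ) (extTab lam nu N)) ∧
    ∀ N ∈ diagram mu, ∀ N' ∈ diagram lam,
      ((List.ofFn σ).reverse.prod : Equiv.Perm ℕ) (extTab lam nu N) = initTab lam N' →
      res e κ N = res e κ N' := by
  classical
  obtain ⟨hlamMP, hlamcard⟩ := hlam
  obtain ⟨hmuMP, hmucard⟩ := hmu
  obtain ⟨hnuMP, hnucard⟩ := hnu
  -- basic set-theoretic facts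
  have hfinNu : (diagram nu).Finite := CPAux.diagram_finite hnuMP
  have hLamNu : diagram lam ⊆ diagram nu := by rw [hunion]; exact Set.subset_union_left
  have hMuNu : diagram mu ⊆ diagram nu := by rw [hunion]; exact Set.subset_union_right
  have hfinL : (diagram lam).Finite := hfinNu.subset hLamNu
  have hfinMu : (diagram mu).Finite := hfinNu.subset hMuNu
  have hMsub : anchoredShape Nmu fstar ⊆ diagram nu := by
    rw [← hmustar]; exact Set.diff_subset
  have hLsub : anchoredShape Nlam fstar ⊆ diagram nu := by
    rw [← hlamstar]; exact Set.diff_subset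
  have hLamEq : diagram nu \ anchoredShape Nmu fstar = diagram lam := by
    rw [← hmustar, Set.diff_diff_cancel_left hLamNu]
  have hMuEq : diagram nu \ anchoredShape Nlam fstar = diagram mu := by
    rw [← hlamstar, Set.diff_diff_cancel_left hMuNu]
  -- `c` is positive
  have hc0 : 0 < c := by
    by_contra hcon
    have hc' : c = 0 := by omega
    subst hc'
    have h0 : (Fin.last 0) = (0 : Fin 1) := rfl
    have hML : anchoredShape Nmu fstar = anchoredShape Nlam fstar := by
      rw [← hxi0, ← h0, hxic]
    have hNmuMem : Nmu ∈ anchoredShape Nmu fstar := CPAux.anchor_mem hfstar0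
    exact CPAux.nodeLt_irrefl Nmu (hprec Nmu hNmuMem Nmu (hML ▸ hNmuMem))
  set lastk : Fin c := ⟨c - 1, by omega⟩ with hlkdef
  have hlastsucc : lastk.succ = Fin.last c := by
    apply Fin.ext
    simp only [Fin.val_succ, Fin.val_last, hlkdef]
    omega
  have hlast_ge : ∀ k : Fin c, k ≤ lastk := by
    intro k
    rw [Fin.le_def]
    have := k.isLt
    simp only [hlkdef]
    omega
  have hklast : ∀ k : Fin c, ¬ ((k.succ : Fin (c+1)) : ℕ) < c → k.succ = Fin.last c := by
    intro k h
    apply Fin.ext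
    rw [Fin.val_succ, Fin.val_last]
    have := k.isLt
    rw [Fin.val_succ] at h
    omega
  have hsuccpos : ∀ k : Fin c, 0 < ((k.succ : Fin (c+1)) : ℕ) := by
    intro k; rw [Fin.val_succ]; omega
  -- data of the last shape
  obtain ⟨hAlast, hflast⟩ :=
    CPAux.anchoredShape_uniq (hxi (Fin.last c)).2 hfstar0 hxic
  -- inclusion of shapes in the diagram of ν
  have hXiNu : ∀ k : Fin c, anchoredShape (Axi k.succ) (fxi k.succ) ⊆ diagram nu := by
    intro k
    by_cases hkc : ((k.succ : Fin (c+1)) : ℕ) < c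
    · exact (hmaximal k.succ (hsuccpos k) hkc).1.2.1.1
    · rw [hklast k hkc, hxic]; exact hLsub
  have hXidiag : ∀ k : Fin c,
      IsMPDiagram (diagram nu \ anchoredShape (Axi k.succ) (fxi k.succ)) := by
    intro k
    by_cases hkc : ((k.succ : Fin (c+1)) : ℕ) < c
    · have hrem := (hmaximal k.succ (hsuccpos k) hkc).1.2.1
      rcases CPAux.reached_diagram hrem.2 with heq | hdiag
      · exfalso
        have hA : Axi k.succ ∈ anchoredShape (Axi k.succ) (fxi k.succ) :=
          CPAux.anchor_mem (hxi k.succ).2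
        have hAν : Axi k.succ ∈ diagram nu := hrem.1 hA
        rw [← heq] at hAν
        exact hAν.2 hA
      · exact hdiag
    · rw [hklast k hkc, hxic, hMuEq]
      exact ⟨mu, hmuMP, rfl⟩
  -- subshape data
  have hsub : ∀ k : Fin c,
      (∀ x, fxi k.succ x ≤ fstar x) ∧ res e κ (Axi k.succ) = res e κ Nmu := by
    intro k
    by_cases hkc : ((k.succ : Fin (c+1)) : ℕ) < c
    · obtain ⟨N₀, N₁, f', g', hf'p, hg'p, hf'0, hg'0, hSeq, hTeq, hle, hres⟩ :=
        (hmaximal k.succ (hsuccpos k) hkc).1.2.2.2.1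
      obtain ⟨hA0, hf0⟩ := CPAux.anchoredShape_uniq (hxi k.succ).2 hf'0 hSeq
      obtain ⟨hA1, hg1⟩ := CPAux.anchoredShape_uniq hfstar0 hg'0 hTeq
      constructor
      · intro x
        rw [hf0 x]
        calc f' x ≤ g' x := hle x
          _ = fstar x := (hg1 x).symm
      · rw [hA0, hres, ← hA1]
    · have hk := hklast k hkc
      rw [hk]
      exact ⟨fun x => (hflast x).le, by rw [hAlast]; exact hcong.symm⟩
  have hCkM : ∀ k : Fin c,
      anchoredShape Nmu (fxi k.succ) ⊆ anchoredShape Nmu fstar :=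
    fun k => CPAux.anchoredShape_mono (hsub k).1
  have hCklast : anchoredShape Nmu (fxi lastk.succ) = anchoredShape Nmu fstar := by
    rw [hlastsucc]
    exact CPAux.anchoredShape_congr hflast
  have hXilast : anchoredShape (Axi lastk.succ) (fxi lastk.succ) =
      anchoredShape Nlam fstar := by
    rw [hlastsucc]; exact hxic
  -- precedence facts
  have hchain' : ∀ j k : Fin c, j < k →
      ShapePrec (anchoredShape (Axi j.succ) (fxi j.succ))
        (anchoredShape (Axi k.succ) (fxi k.succ)) := by
    intro j k h
    exact hchain j.succ k.succ (by rwa [Fin.succ_lt_succ_iff])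
  have hprecM' : ∀ k : Fin c, ShapePrec (anchoredShape Nmu fstar)
      (anchoredShape (Axi k.succ) (fxi k.succ)) := by
    intro k
    have h0 := hchain 0 k.succ (Fin.succ_pos k)
    rwa [hxi0] at h0
  have hMXi : ∀ (k : Fin c) (N : Node ℓ), N ∈ anchoredShape Nmu fstar →
      N ∈ anchoredShape (Axi k.succ) (fxi k.succ) → False :=
    fun k N h1 h2 => CPAux.nodeLt_irrefl N (hprecM' k N h1 N h2)
  have hXiXi : ∀ j k : Fin c, j ≠ k → ∀ N : Node ℓ,
      N ∈ anchoredShape (Axi j.succ) (fxi j.succ) →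
      N ∈ anchoredShape (Axi k.succ) (fxi k.succ) → False := by
    intro j k hjk N h1 h2
    rcases lt_trichotomy j k with h | h | h
    · exact CPAux.nodeLt_irrefl N (hchain' j k h N h1 N h2)
    · exact hjk h
    · exact CPAux.nodeLt_irrefl N (hchain' k j h N h2 N h1)
  have hXiL : ∀ k : Fin c,
      anchoredShape (Axi k.succ) (fxi k.succ) ⊆ diagram lam := by
    intro k N hN
    rw [← hLamEq]
    exact ⟨hXiNu k hN, fun hM => hMXi k N hM hN⟩
  -- properties of the tableau `extTab lam nu`
  have hrkγ : (diagram nu \ diagram lam).ncard = γ := by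
    rw [Set.ncard_diff hLamNu hfinL, hnucard, hlamcard]
    omega
  have hfinD : (diagram nu \ diagram lam).Finite := hfinNu.subset Set.diff_subset
  have hTL : ∀ N ∈ diagram lam, extTab lam nu N = CPAux.rk (diagram lam) N :=
    fun N h => CPAux.extTab_pos h
  have hTD : ∀ N ∈ diagram nu \ diagram lam,
      extTab lam nu N = n + CPAux.rk (diagram nu \ diagram lam) N := by
    intro N h
    rw [CPAux.extTab_neg h.2, hlamcard]
  have hbijL : Set.BijOn (extTab lam nu) (diagram lam) (Set.Icc 1 n) := by
    have hb := CPAux.rk_bijOn hfinL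
    rw [hlamcard] at hb
    exact hb.congr (fun N h => (hTL N h).symm)
  have hmonoL : ∀ a ∈ diagram lam, ∀ b ∈ diagram lam, nodeLt a b →
      extTab lam nu a < extTab lam nu b := by
    intro a ha b hb hab
    rw [hTL a ha, hTL b hb]
    exact CPAux.rk_lt_rk hfinL ha hab
  have hmonoD : ∀ a ∈ diagram nu \ diagram lam, ∀ b ∈ diagram nu \ diagram lam,
      nodeLt a b → extTab lam nu a < extTab lam nu b := by
    intro a ha b hb hab
    rw [hTD a ha, hTD b hb]
    exact Nat.add_lt_add_left (CPAux.rk_lt_rk hfinD ha hab) n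
  have hTL_le : ∀ N ∈ diagram lam, extTab lam nu N ≤ n :=
    fun N h => (hbijL.mapsTo h).2
  have hTD_ge : ∀ N ∈ diagram nu \ diagram lam, n + 1 ≤ extTab lam nu N := by
    intro N h
    rw [hTD N h]
    have := (CPAux.rk_mem hfinD h).1
    omega
  have hinjNu : Set.InjOn (extTab lam nu) (diagram nu) := by
    intro a ha b hb hab
    by_cases haL : a ∈ diagram lam <;> by_cases hbL : b ∈ diagram lam
    · exact hbijL.injOn haL hbL hab
    · have h1 := hTL_le a haL
      have h2 := hTD_ge b ⟨hb, hbL⟩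
      omega
    · have h1 := hTL_le b hbL
      have h2 := hTD_ge a ⟨ha, haL⟩
      omega
    · have h1 : CPAux.rk (diagram nu \ diagram lam) a =
          CPAux.rk (diagram nu \ diagram lam) b := by
        have ha' := hTD a ⟨ha, haL⟩
        have hb' := hTD b ⟨hb, hbL⟩
        omega
      exact (CPAux.rk_bijOn hfinD).injOn ⟨ha, haL⟩ ⟨hb, hbL⟩ h1
  have hmonoM : ∀ a ∈ anchoredShape Nmu fstar, ∀ b ∈ anchoredShape Nmu fstar,
      nodeLt a b → extTab lam nu a < extTab lam nu b := by
    intro a ha b hb hab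
    rw [← hmustar] at ha hb
    exact hmonoD a ha b hb hab
  -- the step maps and the conjugation identity
  set ms : Fin c → Node ℓ → Node ℓ :=
    fun k => CPAux.stepMap (Axi k.succ) Nmu (fxi k.succ) with hmsdef
  have hconj : ∀ k : Fin c, ∀ N ∈ diagram nu,
      (σ k) (extTab lam nu N) = extTab lam nu (ms k N) := by
    intro k
    simp only [hmsdef]
    exact CPAux.step_conj (extTab lam nu) (diagram nu) hfinNu (Axi k.succ) Nmu
      (fxi k.succ) (hXiNu k) ((hCkM k).trans hMsub)
      (fun N h1 h2 => hMXi k N (hCkM k h2) h1) hinjNu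
      (fun a ha b hb hab => hmonoL a (hXiL k ha) b (hXiL k hb) hab)
      (fun a ha b hb hab => hmonoM a (hCkM k ha) b (hCkM k hb) hab)
      (σ k) (hσ k)
  have hmemstep : ∀ k : Fin c, ∀ N ∈ diagram nu, ms k N ∈ diagram nu := by
    intro k N hN
    simp only [hmsdef]
    by_cases hX : N ∈ anchoredShape (Axi k.succ) (fxi k.succ)
    · rw [CPAux.stepMap_pos₁ hX]
      exact hMsub (hCkM k (CPAux.trOff_mem hX))
    · by_cases hC : N ∈ anchoredShape Nmu (fxi k.succ)
      · rw [CPAux.stepMap_pos₂ hX hC]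
        exact hXiNu k (CPAux.trOff_mem hC)
      · rw [CPAux.stepMap_neg hX hC]
        exact hN
  have hresstep : ∀ k : Fin c, ∀ N ∈ diagram nu, res e κ (ms k N) = res e κ N := by
    intro k N _
    simp only [hmsdef]
    by_cases hX : N ∈ anchoredShape (Axi k.succ) (fxi k.succ)
    · rw [CPAux.stepMap_pos₁ hX, CPAux.trOff_res hX, (hsub k).2]
      ring
    · by_cases hC : N ∈ anchoredShape Nmu (fxi k.succ)
      · rw [CPAux.stepMap_pos₂ hX hC, CPAux.trOff_res hC, (hsub k).2]
        ring
      · rw [CPAux.stepMap_neg hX hC]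
  have hπ : ∀ N ∈ diagram nu,
      ((List.ofFn σ).reverse.prod : Equiv.Perm ℕ) (extTab lam nu N) =
        extTab lam nu (CPAux.iterFin c ms N) :=
    CPAux.prod_conj (extTab lam nu) (diagram nu) c σ ms hconj hmemstep
  have hPhires : ∀ N ∈ diagram nu, res e κ (CPAux.iterFin c ms N) = res e κ N :=
    fun N hN => CPAux.iterFin_invariant (res e κ) c ms hmemstep hresstep N hN
  -- the fixing lemma
  have hfixes : ∀ (k : Fin c) (N : Node ℓ),
      N ∉ anchoredShape (Axi k.succ) (fxi k.succ) →
      N ∉ anchoredShape Nmu (fxi k.succ) → ms k N = N := by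
    intro k N h1 h2
    simp only [hmsdef]
    exact CPAux.stepMap_neg h1 h2
  -- trajectories
  have htrajM : ∀ N ∈ anchoredShape Nmu fstar, ∃ k₀ : Fin c,
      N ∈ anchoredShape Nmu (fxi k₀.succ) ∧
      (∀ k' : Fin c, N ∈ anchoredShape Nmu (fxi k'.succ) → k₀ ≤ k') ∧
      CPAux.iterFin c ms N = CPAux.trOff Nmu (Axi k₀.succ) N := by
    intro N hN
    set K : Finset (Fin c) :=
      Finset.univ.filter (fun k => N ∈ anchoredShape Nmu (fxi k.succ)) with hK
    have hKne : K.Nonempty := by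
      refine ⟨lastk, ?_⟩
      simp only [hK, Finset.mem_filter, Finset.mem_univ, true_and]
      rw [hCklast]
      exact hN
    set k₀ := K.min' hKne with hk₀def
    have hk₀K : k₀ ∈ K := K.min'_mem hKne
    have hmem₀ : N ∈ anchoredShape Nmu (fxi k₀.succ) := by
      simpa only [hK, Finset.mem_filter, Finset.mem_univ, true_and] using hk₀K
    have hmin : ∀ k' : Fin c, N ∈ anchoredShape Nmu (fxi k'.succ) → k₀ ≤ k' := by
      intro k' h
      refine K.min'_le k' ?_
      simp only [hK, Finset.mem_filter, Finset.mem_univ, true_and]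
      exact h
    refine ⟨k₀, hmem₀, hmin, ?_⟩
    apply CPAux.iterFin_single c ms N _ k₀
    · intro k hk
      apply hfixes
      · exact fun hX => hMXi k N hN hX
      · exact fun hC => absurd (hmin k hC) (not_le.mpr hk)
    · simp only [hmsdef]
      exact CPAux.stepMap_pos₂ (fun hX => hMXi k₀ N hN hX) hmem₀
    · intro k hk
      have hMXi₀ : CPAux.trOff Nmu (Axi k₀.succ) N ∈
          anchoredShape (Axi k₀.succ) (fxi k₀.succ) := CPAux.trOff_mem hmem₀
      apply hfixes
      · exact fun hX => hXiXi k₀ k (ne_of_lt hk) _ hMXi₀ hX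
      · exact fun hC => hMXi k₀ _ (hCkM k hC) hMXi₀
  have htrajXiLast : ∀ N ∈ anchoredShape (Axi lastk.succ) (fxi lastk.succ),
      CPAux.iterFin c ms N = CPAux.trOff (Axi lastk.succ) Nmu N := by
    intro N hN
    apply CPAux.iterFin_single c ms N _ lastk
    · intro k hk
      apply hfixes
      · exact fun hX => hXiXi k lastk (ne_of_lt hk) N hX hN
      · exact fun hC => hMXi lastk N (hCkM k hC) hN
    · simp only [hmsdef]
      exact CPAux.stepMap_pos₁ hN
    · intro k hk
      exact absurd (hlast_ge k) (not_le.mpr hk)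
  have htrajXi : ∀ (k₁ : Fin c), k₁ ≠ lastk →
      ∀ N ∈ anchoredShape (Axi k₁.succ) (fxi k₁.succ), ∃ k₂ : Fin c, k₁ < k₂ ∧
      CPAux.trOff (Axi k₁.succ) Nmu N ∈ anchoredShape Nmu (fxi k₂.succ) ∧
      (∀ k' : Fin c, k₁ < k' →
        CPAux.trOff (Axi k₁.succ) Nmu N ∈ anchoredShape Nmu (fxi k'.succ) → k₂ ≤ k') ∧
      CPAux.iterFin c ms N =
        CPAux.trOff Nmu (Axi k₂.succ) (CPAux.trOff (Axi k₁.succ) Nmu N) := by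
    intro k₁ hk₁ N hN
    have hMC : CPAux.trOff (Axi k₁.succ) Nmu N ∈ anchoredShape Nmu (fxi k₁.succ) :=
      CPAux.trOff_mem hN
    have hMM : CPAux.trOff (Axi k₁.succ) Nmu N ∈ anchoredShape Nmu fstar := hCkM k₁ hMC
    have hk₁last : k₁ < lastk := lt_of_le_of_ne (hlast_ge k₁) hk₁
    set K : Finset (Fin c) := Finset.univ.filter (fun k => k₁ < k ∧
      CPAux.trOff (Axi k₁.succ) Nmu N ∈ anchoredShape Nmu (fxi k.succ)) with hK
    have hKne : K.Nonempty := by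
      refine ⟨lastk, ?_⟩
      simp only [hK, Finset.mem_filter, Finset.mem_univ, true_and]
      refine ⟨hk₁last, ?_⟩
      rw [hCklast]
      exact hMM
    set k₂ := K.min' hKne with hk₂def
    have hk₂K : k₂ ∈ K := K.min'_mem hKne
    have hk₂prop : k₁ < k₂ ∧
        CPAux.trOff (Axi k₁.succ) Nmu N ∈ anchoredShape Nmu (fxi k₂.succ) := by
      simpa only [hK, Finset.mem_filter, Finset.mem_univ, true_and] using hk₂K
    have hmin : ∀ k' : Fin c, k₁ < k' →
        CPAux.trOff (Axi k₁.succ) Nmu N ∈ anchoredShape Nmu (fxi k'.succ) → k₂ ≤ k' := by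
      intro k' h1 h2
      exact K.min'_le k' (by
        simp only [hK, Finset.mem_filter, Finset.mem_univ, true_and]
        exact ⟨h1, h2⟩)
    refine ⟨k₂, hk₂prop.1, hk₂prop.2, hmin, ?_⟩
    apply CPAux.iterFin_double c ms N (CPAux.trOff (Axi k₁.succ) Nmu N) _ k₁ k₂ hk₂prop.1
    · intro k hk
      apply hfixes
      · exact fun hX => hXiXi k k₁ (ne_of_lt hk) N hX hN
      · exact fun hC => hMXi k₁ N (hCkM k hC) hN
    · simp only [hmsdef]
      exact CPAux.stepMap_pos₁ hN
    · intro k hka hkb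
      apply hfixes
      · exact fun hX => hMXi k _ hMM hX
      · exact fun hC => absurd (hmin k hka hC) (not_le.mpr hkb)
    · simp only [hmsdef]
      exact CPAux.stepMap_pos₂ (fun hX => hMXi k₂ _ hMM hX) hk₂prop.2
    · intro k hk
      have hM'Xi : CPAux.trOff Nmu (Axi k₂.succ) (CPAux.trOff (Axi k₁.succ) Nmu N) ∈
          anchoredShape (Axi k₂.succ) (fxi k₂.succ) := CPAux.trOff_mem hk₂prop.2
      apply hfixes
      · exact fun hX => hXiXi k₂ k (ne_of_lt hk) _ hM'Xi hX
      · exact fun hC => hMXi k₂ _ (hCkM k hC) hM'Xi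
  -- region decomposition for nodes of μ
  have hregion : ∀ N ∈ diagram mu, N ∈ anchoredShape Nmu fstar ∨
      (∃ k₁ : Fin c, k₁ ≠ lastk ∧ N ∈ anchoredShape (Axi k₁.succ) (fxi k₁.succ)) ∨
      (N ∉ anchoredShape Nmu fstar ∧
        ∀ k : Fin c, N ∉ anchoredShape (Axi k.succ) (fxi k.succ)) := by
    intro N hNμ
    by_cases hM : N ∈ anchoredShape Nmu fstar
    · exact Or.inl hM
    by_cases hX : ∃ k : Fin c, N ∈ anchoredShape (Axi k.succ) (fxi k.succ)
    · obtain ⟨k, hk⟩ := hX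
      refine Or.inr (Or.inl ⟨k, ?_, hk⟩)
      intro hcon
      subst hcon
      rw [hXilast] at hk
      have hd : N ∈ diagram nu \ diagram mu := by rw [hlamstar]; exact hk
      exact hd.2 hNμ
    · push_neg at hX
      exact Or.inr (Or.inr ⟨hM, hX⟩)
  have htrajPlain : ∀ N : Node ℓ, N ∉ anchoredShape Nmu fstar →
      (∀ k : Fin c, N ∉ anchoredShape (Axi k.succ) (fxi k.succ)) →
      CPAux.iterFin c ms N = N := by
    intro N h1 h2
    apply CPAux.iterFin_fixed
    intro k
    exact hfixes k N (h2 k) (fun hC => h1 (hCkM k hC))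
  have hPhiL : ∀ N ∈ diagram mu, CPAux.iterFin c ms N ∈ diagram lam := by
    intro N hNμ
    rcases hregion N hNμ with hM | ⟨k₁, hk₁, hX⟩ | ⟨h1, h2⟩
    · obtain ⟨k₀, hmem, hmin, heq⟩ := htrajM N hM
      rw [heq]
      exact hXiL k₀ (CPAux.trOff_mem hmem)
    · obtain ⟨k₂, hlt2, hmem, hmin, heq⟩ := htrajXi k₁ hk₁ N hX
      rw [heq]
      exact hXiL k₂ (CPAux.trOff_mem hmem)
    · rw [htrajPlain N h1 h2, ← hLamEq]
      exact ⟨hMuNu hNμ, h1⟩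
  -- closure lemmas
  have hclose : ∀ (S : Set (Node ℓ)), S ⊆ diagram nu → IsMPDiagram (diagram nu \ S) →
      ∀ N ∈ S, ∀ N' ∈ diagram nu,
      (N' = ((N.1, N.2.1, N.2.2 + 1) : Node ℓ) ∨
        N' = ((N.1, N.2.1 + 1, N.2.2) : Node ℓ)) → N' ∈ S := by
    rintro S hSν ⟨ρ, hρMP, hρeq⟩ N hNS N' hN'ν hnb
    by_contra hcon
    have hN'ρ : N' ∈ diagram ρ := by rw [hρeq]; exact ⟨hN'ν, hcon⟩
    have hNρ : N ∈ diagram ρ := by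
      rcases hnb with h | h
      · rw [h] at hN'ρ
        exact CPAux.diagram_left (m := N.1) (r := N.2.1) (c := N.2.2) hN'ρ
      · rw [h] at hN'ρ
        exact CPAux.diagram_up hρMP hN'ρ
    rw [hρeq] at hNρ
    exact hNρ.2 hNS
  have hMdiag : IsMPDiagram (diagram nu \ anchoredShape Nmu fstar) :=
    ⟨lam, hlamMP, hLamEq.symm⟩
  have hCclose : ∀ (k : Fin c) (N N' : Node ℓ), N ∈ anchoredShape Nmu fstar →
      (N' = ((N.1, N.2.1, N.2.2 + 1) : Node ℓ) ∨
        N' = ((N.1, N.2.1 + 1, N.2.2) : Node ℓ)) →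
      N' ∈ anchoredShape Nmu (fxi k.succ) → N ∈ anchoredShape Nmu (fxi k.succ) := by
    intro k N N' hNM hnb hN'
    have hmem := CPAux.mem_anchoredShape.mp hNM
    rcases hnb with h | h
    · exact CPAux.mem_of_left hmem.2.2.1 (h ▸ hN')
    · exact CPAux.mem_of_up (hxi k.succ).1 hmem.2.1 (h ▸ hN')
  -- the key comparison
  have hcompare : ∀ N ∈ diagram mu, ∀ N' ∈ diagram mu,
      (N' = ((N.1, N.2.1, N.2.2 + 1) : Node ℓ) ∨
        N' = ((N.1, N.2.1 + 1, N.2.2) : Node ℓ)) →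
      nodeLt (CPAux.iterFin c ms N) (CPAux.iterFin c ms N') := by
    intro N hNμ N' hN'μ hnb
    have hlt := CPAux.nb_lt hnb
    rcases hregion N hNμ with hM | ⟨k₁, hk₁, hX⟩ | ⟨h1, h2⟩
    · have hN'M : N' ∈ anchoredShape Nmu fstar :=
        hclose _ hMsub hMdiag N hM N' (hMuNu hN'μ) hnb
      obtain ⟨k₀, hm0, hmin0, he0⟩ := htrajM N hM
      obtain ⟨k₀', hm0', hmin0', he0'⟩ := htrajM N' hN'M
      have hle : k₀ ≤ k₀' := hmin0 k₀' (hCclose k₀' N N' hM hnb hm0')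
      rw [he0, he0']
      rcases lt_or_eq_of_le hle with hlt2 | heq2
      · exact hchain' k₀ k₀' hlt2 _ (CPAux.trOff_mem hm0) _ (CPAux.trOff_mem hm0')
      · subst heq2
        exact CPAux.trOff_lt hm0 hm0' hlt
    · have hN'X : N' ∈ anchoredShape (Axi k₁.succ) (fxi k₁.succ) :=
        hclose _ (hXiNu k₁) (hXidiag k₁) N hX N' (hMuNu hN'μ) hnb
      obtain ⟨k₂, hl2, hm2, hmin2, he2⟩ := htrajXi k₁ hk₁ N hX
      obtain ⟨k₂', hl2', hm2', hmin2', he2'⟩ := htrajXi k₁ hk₁ N' hN'X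
      have hMnb : CPAux.trOff (Axi k₁.succ) Nmu N' =
          (((CPAux.trOff (Axi k₁.succ) Nmu N).1, (CPAux.trOff (Axi k₁.succ) Nmu N).2.1,
            (CPAux.trOff (Axi k₁.succ) Nmu N).2.2 + 1) : Node ℓ) ∨
          CPAux.trOff (Axi k₁.succ) Nmu N' =
          (((CPAux.trOff (Axi k₁.succ) Nmu N).1, (CPAux.trOff (Axi k₁.succ) Nmu N).2.1 + 1,
            (CPAux.trOff (Axi k₁.succ) Nmu N).2.2) : Node ℓ) := by
        rcases hnb with h | h
        · exact Or.inl (by rw [h]; exact CPAux.trOff_nb_right hX)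
        · exact Or.inr (by rw [h]; exact CPAux.trOff_nb_down hX)
      have hle : k₂ ≤ k₂' := hmin2 k₂' hl2'
        (hCclose k₂' _ _ (hCkM k₁ (CPAux.trOff_mem hX)) hMnb hm2')
      rw [he2, he2']
      rcases lt_or_eq_of_le hle with hlt2 | heq2
      · exact hchain' k₂ k₂' hlt2 _ (CPAux.trOff_mem hm2) _ (CPAux.trOff_mem hm2')
      · subst heq2
        exact CPAux.trOff_lt hm2 hm2' (CPAux.trOff_lt hX hN'X hlt)
    · rw [htrajPlain N h1 h2]
      rcases hregion N' hN'μ with hM' | ⟨k₁', hk₁', hX'⟩ | ⟨h1', h2'⟩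
      · obtain ⟨k₀', hm0', _, he0'⟩ := htrajM N' hM'
        rw [he0']
        exact CPAux.nodeLt_trans hlt (hprecM' k₀' N' hM' _ (CPAux.trOff_mem hm0'))
      · obtain ⟨k₂', hl2', hm2', _, he2'⟩ := htrajXi k₁' hk₁' N' hX'
        rw [he2']
        exact CPAux.nodeLt_trans hlt (hchain' k₁' k₂' hl2' N' hX' _ (CPAux.trOff_mem hm2'))
      · rw [htrajPlain N' h1' h2']
        exact hlt
  -- assembling the final statement
  have hmaps : Set.MapsTo (fun N => ((List.ofFn σ).reverse.prod : Equiv.Perm ℕ)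
      (extTab lam nu N)) (diagram mu) (Set.Icc 1 n) := by
    intro N hN
    show ((List.ofFn σ).reverse.prod : Equiv.Perm ℕ) (extTab lam nu N) ∈ Set.Icc 1 n
    rw [hπ N (hMuNu hN)]
    exact hbijL.mapsTo (hPhiL N hN)
  have hinjMu : Set.InjOn (fun N => ((List.ofFn σ).reverse.prod : Equiv.Perm ℕ)
      (extTab lam nu N)) (diagram mu) := by
    intro a ha b hb hab
    have hab' : extTab lam nu a = extTab lam nu b := Equiv.injective _ hab
    exact hinjNu (hMuNu ha) (hMuNu hb) hab'
  refine ⟨⟨⟨hmaps, hinjMu, ?_⟩, ?_, ?_⟩, ?_⟩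
  · -- surjectivity
    have himg : (fun N => ((List.ofFn σ).reverse.prod : Equiv.Perm ℕ)
        (extTab lam nu N)) '' diagram mu ⊆ Set.Icc 1 n := Set.image_subset_iff.mpr hmaps
    have hncard : (Set.Icc 1 n).ncard ≤ ((fun N => ((List.ofFn σ).reverse.prod :
        Equiv.Perm ℕ) (extTab lam nu N)) '' diagram mu).ncard := by
      rw [Set.ncard_image_of_injOn hinjMu, hmucard, CPAux.ncard_Icc]
      omega
    have heqset := Set.eq_of_subset_of_ncard_le himg hncard (Set.finite_Icc 1 n)
    exact heqset.symm.subset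
  · -- rows increase
    intro N hN hN'
    show ((List.ofFn σ).reverse.prod : Equiv.Perm ℕ) (extTab lam nu N) <
      ((List.ofFn σ).reverse.prod : Equiv.Perm ℕ) (extTab lam nu (N.1, N.2.1, N.2.2 + 1))
    rw [hπ N (hMuNu hN), hπ _ (hMuNu hN')]
    exact hmonoL _ (hPhiL N hN) _ (hPhiL _ hN') (hcompare N hN _ hN' (Or.inl rfl))
  · -- columns increase
    intro N hN hN'
    show ((List.ofFn σ).reverse.prod : Equiv.Perm ℕ) (extTab lam nu N) <
      ((List.ofFn σ).reverse.prod : Equiv.Perm ℕ) (extTab lam nu (N.1, N.2.1 + 1, N.2.2))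
    rw [hπ N (hMuNu hN), hπ _ (hMuNu hN')]
    exact hmonoL _ (hPhiL N hN) _ (hPhiL _ hN') (hcompare N hN _ hN' (Or.inr rfl))
  · -- residues
    intro N hN N' hN' heq
    have heq2 : extTab lam nu (CPAux.iterFin c ms N) = extTab lam nu N' := by
      rw [← hπ N (hMuNu hN), heq, CPAux.initTab_eq, ← CPAux.extTab_pos hN']
    have hPhiN : CPAux.iterFin c ms N = N' :=
      hinjNu (hLamNu (hPhiL N hN)) (hLamNu hN') heq2
    calc res e κ N = res e κ (CPAux.iterFin c ms N) := (hPhires N (hMuNu hN)).symm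
      _ = res e κ N' := by rw [hPhiN]
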